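/- For $k \geq 0$ and $r \geq 1$, the identity ${}^k c^{-r}_p = {}^{k+1} c^{-r+1}_p - (x_{k+1} + y_r) \cdot {}^k c^{-r+1}_{p-1}$ holds in $\Gamma[X,Y]$. -/

import Mathlib

noncomputable section
open MvPolynomial

/-- The element `c_p` of the free polynomial ring `ℤ[c_1, c_2, …]`, with the
conventions `c_0 = 1` and `c_p = 0` for `p < 0`. -/
def cFree : ℤ → MvPolynomial ℕ ℤ := fun p =>
  if p ≤ 0 then (if p = 0 then 1 else 0) else X (p.toNat - 1)

/-- The relation `c_p² + 2 ∑_{i=1}^p (-1)^i c_{p+i} c_{p-i}`. -/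
def relC (p : ℕ) : MvPolynomial ℕ ℤ :=
  cFree (p : ℤ) ^ 2 +
    2 * ∑ i ∈ Finset.Icc 1 p,
      (-1 : MvPolynomial ℕ ℤ) ^ i * cFree ((p : ℤ) + i) * cFree ((p : ℤ) - i)

/-- The ideal generated by the relations `relC p` for `p ≥ 1`. -/
def IGam : Ideal (MvPolynomial ℕ ℤ) := Ideal.span {f | ∃ p : ℕ, 1 ≤ p ∧ f = relC p}

/-- The ring `Γ`. -/
abbrev GammaR := MvPolynomial ℕ ℤ ⧸ IGam

/-- The class of `c_p` in `Γ`. -/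
def cQ : ℤ → GammaR := fun p => Ideal.Quotient.mk IGam (cFree p)

/-- The elementary symmetric polynomial `e_j` evaluated at the family `v i`,
`i ∈ s`. -/
def esymF {R : Type*} [CommRing R] {σ : Type*} [DecidableEq σ]
    (s : Finset σ) (v : σ → R) (j : ℕ) : R :=
  ∑ t ∈ Finset.powersetCard j s, ∏ i ∈ t, v i

/-- The complete homogeneous symmetric polynomial `h_j` evaluated at the family
`v i`, `i ∈ s`. -/
def hsymF {R : Type*} [CommRing R] {σ : Type*} [DecidableEq σ]
    (s : Finset σ) (v : σ → R) (j : ℕ) : R :=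
  ∑ m ∈ Finset.sym s j, (m.1.map v).prod

/-- The ring `Γ[X, Y]` in infinitely many variables `x_1, x_2, …` and
`y_1, y_2, …` (the index `0` variables are unused). -/
abbrev SR := MvPolynomial (ℕ ⊕ ℕ) GammaR

/-- The variable `x_k`. -/
def xx (k : ℕ) : SR := X (Sum.inl k)

/-- The variable `y_k`. -/
def yy (k : ℕ) : SR := X (Sum.inr k)

/-- `h^r_j` evaluated at a family `v`: the complete homogeneous symmetric
polynomial `h_j` in `v_1, …, v_r` for `r ≥ 0`, and the elementary symmetric
polynomial `e_j` in `v_1, …, v_{-r}` for `r < 0` (so `h^0_j = δ_{0j}`). -/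
def hkv (v : ℕ → SR) (r : ℤ) (j : ℕ) : SR :=
  if 0 ≤ r then hsymF (Finset.Icc 1 r.toNat) v j
  else esymF (Finset.Icc 1 (-r).toNat) v j

/-- `ᵏc^{k'}_p = ∑_{i,j ≥ 0} c_{p-i-j} h^{-k}_i(X) h^{k'}_j(-Y)`. -/
def kc (k k' p : ℤ) : SR :=
  ∑ i ∈ Finset.range (p.toNat + 1), ∑ j ∈ Finset.range (p.toNat + 1),
    C (cQ (p - i - j)) * hkv xx (-k) i * hkv (fun t => -(yy t)) k' j



lemma cQ_neg {n : ℤ} (h : n < 0) : cQ n = 0 := by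
  unfold cQ cFree
  rw [if_pos h.le, if_neg h.ne, map_zero]

lemma CcQ_neg {n : ℤ} (h : n < 0) : (C (cQ n) : SR) = 0 := by
  rw [cQ_neg h, map_zero]

lemma esymF_insert {R : Type*} [CommRing R] {σ : Type*} [DecidableEq σ]
    {s : Finset σ} {a : σ} (ha : a ∉ s) (v : σ → R) (n : ℕ) :
    esymF (insert a s) v (n + 1) = esymF s v (n + 1) + v a * esymF s v n := by
  unfold esymF
  rw [Finset.powersetCard_succ_insert ha, Finset.sum_union, Finset.sum_image, Finset.mul_sum]
  · congr 1
    refine Finset.sum_congr rfl fun t ht => ?_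
    rw [Finset.prod_insert fun hmem => ha ((Finset.mem_powersetCard.1 ht).1 hmem)]
  · intro t ht u hu htu
    have hat : a ∉ t := fun hmem => ha ((Finset.mem_powersetCard.1 ht).1 hmem)
    have hau : a ∉ u := fun hmem => ha ((Finset.mem_powersetCard.1 hu).1 hmem)
    rw [← Finset.erase_insert hat, ← Finset.erase_insert hau, htu]
  · rw [Finset.disjoint_left]
    intro t ht htim
    obtain ⟨u, hu, rfl⟩ := Finset.mem_image.1 htim
    exact ha ((Finset.mem_powersetCard.1 ht).1 (Finset.mem_insert_self a u))

lemma esymF_zero {R : Type*} [CommRing R] {σ : Type*} [DecidableEq σ]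
    (s : Finset σ) (v : σ → R) : esymF s v 0 = 1 := by
  simp [esymF, Finset.powersetCard_zero]

lemma hsymF_empty_eq {R : Type*} [CommRing R] {σ : Type*} [DecidableEq σ]
    (v : σ → R) (j : ℕ) : hsymF (∅ : Finset σ) v j = esymF (∅ : Finset σ) v j := by
  cases j with
  | zero =>
      simp only [hsymF, esymF, Finset.sym_zero, Finset.powersetCard_zero,
        Finset.sum_singleton, Finset.prod_empty]
      rfl
  | succ n =>
      simp [hsymF, esymF, Finset.sym_empty,
        Finset.powersetCard_eq_empty.2 (by simp : (∅ : Finset σ).card < n + 1)]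

lemma hkv_neg (v : ℕ → SR) (r : ℕ) (j : ℕ) :
    hkv v (-(r : ℤ)) j = esymF (Finset.Icc 1 r) v j := by
  cases r with
  | zero =>
      have : (Finset.Icc 1 0 : Finset ℕ) = ∅ := rfl
      simp only [Nat.cast_zero, neg_zero, hkv, if_pos le_rfl, Int.toNat_zero, this]
      exact hsymF_empty_eq v j
  | succ n =>
      unfold hkv
      rw [if_neg (by omega)]
      norm_num

lemma kc_eq (k k' p : ℤ) (M : ℕ) (hM : p.toNat < M) :
    kc k k' p = ∑ i ∈ Finset.range M, ∑ j ∈ Finset.range M,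
      C (cQ (p - i - j)) * hkv xx (-k) i * hkv (fun t => -(yy t)) k' j := by
  unfold kc
  have hz : ∀ i j : ℕ, p.toNat < i ∨ p.toNat < j →
      (C (cQ (p - i - j)) : SR) * hkv xx (-k) i * hkv (fun t => -(yy t)) k' j = 0 := by
    intro i j hij
    rw [CcQ_neg, zero_mul, zero_mul]
    have := Int.self_le_toNat p
    omega
  have inner : ∀ i : ℕ,
      (∑ j ∈ Finset.range (p.toNat + 1),
        C (cQ (p - i - j)) * hkv xx (-k) i * hkv (fun t => -(yy t)) k' j : SR)
      = ∑ j ∈ Finset.range M,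
        C (cQ (p - i - j)) * hkv xx (-k) i * hkv (fun t => -(yy t)) k' j := by
    intro i
    refine Finset.sum_subset (Finset.range_subset_range.2 (by omega)) fun j _ hj => ?_
    exact hz i j (Or.inr (by simp only [Finset.mem_range, not_lt] at hj; omega))
  simp only [inner]
  refine Finset.sum_subset (Finset.range_subset_range.2 (by omega)) fun i _ hi => ?_
  refine Finset.sum_eq_zero fun j _ => hz i j (Or.inl ?_)
  simp only [Finset.mem_range, not_lt] at hi; omega

lemma helper2 {R : Type*} [CommRing R] (N : ℕ) (A : ℕ → ℕ → R) (E E' G : ℕ → R) (x : R)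
    (hE0 : E' 0 = E 0) (hE : ∀ i, E' (i+1) = E (i+1) + x * E i)
    (hA : ∀ j, A (N+1) j = 0) :
    ∑ i ∈ Finset.range (N+1), ∑ j ∈ Finset.range (N+1), A i j * E' i * G j
      = (∑ i ∈ Finset.range (N+1), ∑ j ∈ Finset.range (N+1), A i j * E i * G j)
        + x * ∑ i ∈ Finset.range (N+1), ∑ j ∈ Finset.range (N+1), A (i+1) j * E i * G j := by
  rw [Finset.sum_range_succ' (fun i => ∑ j ∈ Finset.range (N+1), A i j * E' i * G j) N,
      Finset.sum_range_succ' (fun i => ∑ j ∈ Finset.range (N+1), A i j * E i * G j) N,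
      Finset.sum_range_succ (fun i => ∑ j ∈ Finset.range (N+1), A (i+1) j * E i * G j) N]
  simp only [hE, hE0, hA, zero_mul, Finset.sum_const_zero, add_zero, Finset.mul_sum]
  rw [add_right_comm]
  congr 1
  rw [← Finset.sum_add_distrib]
  refine Finset.sum_congr rfl fun i _ => ?_
  rw [← Finset.sum_add_distrib]
  exact Finset.sum_congr rfl fun j _ => by ring

/-- For `k ≥ 0` and `r ≥ 1`:
`ᵏc^{-r}_p = ᵏ⁺¹c^{-r+1}_p - (x_{k+1} + y_r) ᵏc^{-r+1}_{p-1}` in `Γ[X,Y]`. -/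
theorem kc_recursion (k r : ℕ) (hr : 1 ≤ r) (p : ℤ) :
    kc (k : ℤ) (-(r : ℤ)) p =
      kc ((k : ℤ) + 1) (-(r : ℤ) + 1) p -
        (xx (k + 1) + yy r) * kc (k : ℤ) (-(r : ℤ) + 1) (p - 1) := by
  obtain ⟨r, rfl⟩ : ∃ r', r = r' + 1 := ⟨r - 1, by omega⟩
  clear hr
  set N : ℕ := p.toNat + 1 with hN
  rw [kc_eq _ _ p (N+1) (by omega), kc_eq _ _ p (N+1) (by omega),
      kc_eq _ _ (p-1) (N+1) (by have := Int.toNat_le_toNat (show p - 1 ≤ p by omega); omega)]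
  have h1 : -((k:ℤ)+1) = -(((k+1:ℕ)):ℤ) := by push_cast; ring
  have h2 : -(((r+1:ℕ)):ℤ) + 1 = -((r:ℕ):ℤ) := by push_cast; ring
  rw [h1]
  simp only [h2, neg_neg, hkv_neg]
  -- abbreviations (statement level only)
  have hEins : ∀ i, esymF (Finset.Icc 1 (k+1)) xx (i+1)
      = esymF (Finset.Icc 1 k) xx (i+1) + xx (k+1) * esymF (Finset.Icc 1 k) xx i := by
    intro i
    rw [← Finset.insert_Icc_right_eq_Icc_add_one (by omega), esymF_insert (by simp)]
  have hE0 : esymF (Finset.Icc 1 (k+1)) xx 0 = esymF (Finset.Icc 1 k) xx 0 := by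
    rw [esymF_zero, esymF_zero]
  have hFins : ∀ j, esymF (Finset.Icc 1 (r+1)) (fun t => -(yy t)) (j+1)
      = esymF (Finset.Icc 1 r) (fun t => -(yy t)) (j+1)
        + (-(yy (r+1))) * esymF (Finset.Icc 1 r) (fun t => -(yy t)) j := by
    intro j
    rw [← Finset.insert_Icc_right_eq_Icc_add_one (by omega), esymF_insert (by simp)]
  have hF0 : esymF (Finset.Icc 1 (r+1)) (fun t => -(yy t)) 0
      = esymF (Finset.Icc 1 r) (fun t => -(yy t)) 0 := by
    rw [esymF_zero, esymF_zero]
  have hple : (p : ℤ) ≤ (p.toNat : ℤ) := Int.self_le_toNat p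
  have hAvan : ∀ j : ℕ, (C (cQ (p - ((N+1 : ℕ) : ℤ) - (j : ℤ))) : SR) = 0 := by
    intro j
    refine CcQ_neg ?_
    push_cast
    omega
  have e1 : (∑ i ∈ Finset.range (N+1), ∑ j ∈ Finset.range (N+1),
        (C (cQ (p - i - j)) : SR) * esymF (Finset.Icc 1 (k+1)) xx i
          * esymF (Finset.Icc 1 r) (fun t => -(yy t)) j)
      = (∑ i ∈ Finset.range (N+1), ∑ j ∈ Finset.range (N+1),
          (C (cQ (p - i - j)) : SR) * esymF (Finset.Icc 1 k) xx i
            * esymF (Finset.Icc 1 r) (fun t => -(yy t)) j)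
        + xx (k+1) * ∑ i ∈ Finset.range (N+1), ∑ j ∈ Finset.range (N+1),
            (C (cQ (p - (i+1 : ℕ) - j)) : SR) * esymF (Finset.Icc 1 k) xx i
              * esymF (Finset.Icc 1 r) (fun t => -(yy t)) j :=
    helper2 N (fun i j => (C (cQ (p - i - j)) : SR))
      (fun i => esymF (Finset.Icc 1 k) xx i) (fun i => esymF (Finset.Icc 1 (k+1)) xx i)
      (fun j => esymF (Finset.Icc 1 r) (fun t => -(yy t)) j) (xx (k+1))
      hE0 hEins (fun j => hAvan j)
  have e2' : (∑ j ∈ Finset.range (N+1), ∑ i ∈ Finset.range (N+1),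
        (C (cQ (p - i - j)) : SR) * esymF (Finset.Icc 1 (r+1)) (fun t => -(yy t)) j
          * esymF (Finset.Icc 1 k) xx i)
      = (∑ j ∈ Finset.range (N+1), ∑ i ∈ Finset.range (N+1),
          (C (cQ (p - i - j)) : SR) * esymF (Finset.Icc 1 r) (fun t => -(yy t)) j
            * esymF (Finset.Icc 1 k) xx i)
        + (-(yy (r+1))) * ∑ j ∈ Finset.range (N+1), ∑ i ∈ Finset.range (N+1),
            (C (cQ (p - i - (j+1 : ℕ))) : SR) * esymF (Finset.Icc 1 r) (fun t => -(yy t)) j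
              * esymF (Finset.Icc 1 k) xx i :=
    helper2 N (fun j i => (C (cQ (p - i - j)) : SR))
      (fun j => esymF (Finset.Icc 1 r) (fun t => -(yy t)) j)
      (fun j => esymF (Finset.Icc 1 (r+1)) (fun t => -(yy t)) j)
      (fun i => esymF (Finset.Icc 1 k) xx i) (-(yy (r+1)))
      hF0 hFins (fun i => by
        refine CcQ_neg ?_
        push_cast
        omega)
  -- transpose e2'
  have e2 : (∑ i ∈ Finset.range (N+1), ∑ j ∈ Finset.range (N+1),
        (C (cQ (p - i - j)) : SR) * esymF (Finset.Icc 1 k) xx i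
          * esymF (Finset.Icc 1 (r+1)) (fun t => -(yy t)) j)
      = (∑ i ∈ Finset.range (N+1), ∑ j ∈ Finset.range (N+1),
          (C (cQ (p - i - j)) : SR) * esymF (Finset.Icc 1 k) xx i
            * esymF (Finset.Icc 1 r) (fun t => -(yy t)) j)
        + (-(yy (r+1))) * ∑ i ∈ Finset.range (N+1), ∑ j ∈ Finset.range (N+1),
            (C (cQ (p - i - (j+1 : ℕ))) : SR) * esymF (Finset.Icc 1 k) xx i
              * esymF (Finset.Icc 1 r) (fun t => -(yy t)) j := by
    calc (∑ i ∈ Finset.range (N+1), ∑ j ∈ Finset.range (N+1),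
        (C (cQ (p - i - j)) : SR) * esymF (Finset.Icc 1 k) xx i
          * esymF (Finset.Icc 1 (r+1)) (fun t => -(yy t)) j)
        = ∑ j ∈ Finset.range (N+1), ∑ i ∈ Finset.range (N+1),
            (C (cQ (p - i - j)) : SR) * esymF (Finset.Icc 1 (r+1)) (fun t => -(yy t)) j
              * esymF (Finset.Icc 1 k) xx i := by
          rw [Finset.sum_comm]
          exact Finset.sum_congr rfl fun j _ => Finset.sum_congr rfl fun i _ => by ring
      _ = _ := by
          rw [e2']
          refine congrArg₂ (· + ·) ?_ ?_
          · rw [Finset.sum_comm]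
            exact Finset.sum_congr rfl fun i _ => Finset.sum_congr rfl fun j _ => by ring
          · refine congrArg ((-(yy (r+1)) : SR) * ·) ?_
            rw [Finset.sum_comm]
            exact Finset.sum_congr rfl fun i _ => Finset.sum_congr rfl fun j _ => by ring
  have e3 : (∑ i ∈ Finset.range (N+1), ∑ j ∈ Finset.range (N+1),
        (C (cQ (p - 1 - i - j)) : SR) * esymF (Finset.Icc 1 k) xx i
          * esymF (Finset.Icc 1 r) (fun t => -(yy t)) j)
      = ∑ i ∈ Finset.range (N+1), ∑ j ∈ Finset.range (N+1),
          (C (cQ (p - (i+1 : ℕ) - j)) : SR) * esymF (Finset.Icc 1 k) xx i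
            * esymF (Finset.Icc 1 r) (fun t => -(yy t)) j := by
    refine Finset.sum_congr rfl fun i _ => Finset.sum_congr rfl fun j _ => ?_
    have : p - 1 - (i : ℤ) - (j : ℤ) = p - ((i+1 : ℕ) : ℤ) - (j : ℤ) := by push_cast; ring
    rw [this]
  have e5 : (∑ i ∈ Finset.range (N+1), ∑ j ∈ Finset.range (N+1),
        (C (cQ (p - i - (j+1 : ℕ))) : SR) * esymF (Finset.Icc 1 k) xx i
          * esymF (Finset.Icc 1 r) (fun t => -(yy t)) j)
      = ∑ i ∈ Finset.range (N+1), ∑ j ∈ Finset.range (N+1),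
          (C (cQ (p - (i+1 : ℕ) - j)) : SR) * esymF (Finset.Icc 1 k) xx i
            * esymF (Finset.Icc 1 r) (fun t => -(yy t)) j := by
    refine Finset.sum_congr rfl fun i _ => Finset.sum_congr rfl fun j _ => ?_
    have : p - (i : ℤ) - ((j+1 : ℕ) : ℤ) = p - ((i+1 : ℕ) : ℤ) - (j : ℤ) := by push_cast; ring
    rw [this]
  rw [e5] at e2
  linear_combination e2 - e1 + (xx (k+1) + yy (r+1)) * e3
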